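/- arXiv:2208.04861 — 3 statements merged into one kernel-verified Lean document; each statement's English description precedes it below -/
import Mathlib

section
/- Let X ⊆ Y be a C-contracting closed subset. Suppose a sequence y_n ∈ Y converges to a point η ∈ ∂_hY, and that points x_n ∈ π_X(y_n) converge to a point ξ ∈ ∂_hY. Then ‖b_ξ − b_η‖_∞ ≤ 4C. -/
open Metric Filter Topology Set MeasureTheory Pointwise

noncomputable section

namespace ConfDyn

/-- `γ` is (the image of) a geodesic segment from `x` to `y`. -/
def IsGeodesicIn (Y : Type*) [MetricSpace Y] (γ : Set Y) (x y : Y) : Prop :=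
  ∃ f : ℝ → Y, f 0 = x ∧ f (dist x y) = y ∧
    (∀ s ∈ Set.Icc (0 : ℝ) (dist x y), ∀ t ∈ Set.Icc (0 : ℝ) (dist x y),
      dist (f s) (f t) = |s - t|) ∧
    γ = f '' Set.Icc (0 : ℝ) (dist x y)

/-- `Y` is a geodesic metric space. -/
def GeodesicSpace (Y : Type*) [MetricSpace Y] : Prop :=
  ∀ x y : Y, ∃ γ : Set Y, IsGeodesicIn Y γ x y

/-- the shortest projection of the point `y` to the subset `X`. -/
def projSet {Y : Type*} [MetricSpace Y] (X : Set Y) (y : Y) : Set Y :=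
  {x ∈ X | dist y x = Metric.infDist y X}

/-- the shortest projection of the subset `A` to the subset `X`. -/
def projSetOf {Y : Type*} [MetricSpace Y] (X A : Set Y) : Set Y :=
  ⋃ a ∈ A, projSet X a

/-- `d_X(x,y)`, the diameter of `π_X(x) ∪ π_X(y)`. -/
def projDist {Y : Type*} [MetricSpace Y] (X : Set Y) (x y : Y) : ENNReal :=
  EMetric.diam (projSet X x ∪ projSet X y)

/-- `X` is a `C`-contracting subset: any geodesic segment at distance at least `C`
from `X` has shortest projection to `X` of diameter at most `C`. -/
def IsContractingSet {Y : Type*} [MetricSpace Y] (C : ℝ) (X : Set Y) : Prop :=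
  ∀ x y : Y, ∀ γ : Set Y, IsGeodesicIn Y γ x y →
    (∀ p ∈ γ, C ≤ Metric.infDist p X) →
    EMetric.diam (projSetOf X γ) ≤ ENNReal.ofReal C

/-- the Busemann function based at `o` associated to `y`, `b_y(x) = d(x,y) - d(o,y)`. -/
def busemannCM {Y : Type*} [MetricSpace Y] (o y : Y) : C(Y, ℝ) :=
  ⟨fun x => dist x y - dist o y,
    (continuous_id.dist continuous_const).sub continuous_const⟩

/-- the horofunction compactification of `Y`: the closure of `{b_y : y ∈ Y}` in
`C(Y,ℝ)` with the compact-open topology. -/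
def horoCpt (Y : Type*) [MetricSpace Y] (o : Y) : Set C(Y, ℝ) :=
  closure (Set.range (busemannCM o))

/-- `ξ` is a point of the horofunction boundary `∂_h Y`. -/
def IsHoroPoint {Y : Type*} [MetricSpace Y] (o : Y) (ξ : C(Y, ℝ)) : Prop :=
  ξ ∈ horoCpt Y o ∧ ∀ y : Y, ξ ≠ busemannCM o y

/-- a sequence of points of `Y` converges to `ξ` in the horofunction compactification. -/
def HoroConv {Y : Type*} [MetricSpace Y] (o : Y) (u : ℕ → Y) (ξ : C(Y, ℝ)) : Prop :=
  Filter.Tendsto (fun n => busemannCM o (u n)) atTop (nhds ξ)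

/-- two horofunctions have (K-)finite difference for some K. -/
def FinDiff {Y : Type*} [MetricSpace Y] (ξ η : C(Y, ℝ)) : Prop :=
  ∃ K : ℝ, ∀ z : Y, |ξ z - η z| ≤ K

/-- the locus of a subset of the horofunction boundary. -/
def locus {Y : Type*} [MetricSpace Y] (o : Y) (Λ : Set C(Y, ℝ)) : Set C(Y, ℝ) :=
  {η | IsHoroPoint o η ∧ ∃ ξ ∈ Λ, FinDiff ξ η}

/-- the finite-difference relation as a setoid on `C(Y,ℝ)`. -/
def finDiffSetoid (Y : Type*) [MetricSpace Y] : Setoid C(Y, ℝ) where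
  r := FinDiff
  iseqv := ⟨fun ξ => ⟨0, fun z => by simp⟩,
    fun h => h.imp (fun K hK z => by rw [abs_sub_comm]; exact hK z),
    fun h₁ h₂ => by
      obtain ⟨K₁, hK₁⟩ := h₁
      obtain ⟨K₂, hK₂⟩ := h₂
      exact ⟨K₁ + K₂, fun z => (abs_sub_le _ _ _).trans (add_le_add (hK₁ z) (hK₂ z))⟩⟩

/-- the limit set of a subset `X ⊆ Y` in the horofunction boundary. -/
def limitSetOf {Y : Type*} [MetricSpace Y] (o : Y) (X : Set Y) : Set C(Y, ℝ) :=
  {ξ | IsHoroPoint o ξ ∧ ∃ u : ℕ → Y, (∀ n, u n ∈ X) ∧ HoroConv o u ξ}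

/-- accumulation points of a sequence of points of `Y` in the horofunction boundary. -/
def accPoints {Y : Type*} [MetricSpace Y] (o : Y) (u : ℕ → Y) : Set C(Y, ℝ) :=
  {ξ | IsHoroPoint o ξ ∧ ∃ φ : ℕ → ℕ, StrictMono φ ∧ HoroConv o (u ∘ φ) ξ}

/-- `X` is a quasi-geodesic: the image of a quasi-isometric embedding of a real interval. -/
def IsQuasiGeodesicSet {Y : Type*} [MetricSpace Y] (X : Set Y) : Prop :=
  ∃ (c : ℝ) (I : Set ℝ) (φ : ℝ → Y), 1 ≤ c ∧ I.OrdConnected ∧ X = φ '' I ∧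
    ∀ s ∈ I, ∀ t ∈ I,
      (1 / c) * |s - t| - c ≤ dist (φ s) (φ t) ∧ dist (φ s) (φ t) ≤ c * |s - t| + c

section GroupAction

variable {Y : Type*} [MetricSpace Y] {G : Type*} [Group G] [MulAction G Y]

/-- `G` acts by isometries on `Y`. -/
def IsometricAction (G Y : Type*) [Group G] [MulAction G Y] [MetricSpace Y] : Prop :=
  ∀ g : G, Isometry (fun y : Y => g • y)

/-- the action of `G` on `Y` is (metrically) proper. -/
def ProperAction (G Y : Type*) [Group G] [MulAction G Y] [MetricSpace Y] : Prop :=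
  ∀ B : Set Y, Bornology.IsBounded B → Set.Finite {g : G | (g • B) ∩ B ≠ ∅}

/-- `G` is non-elementary: no finite-index subgroup is trivial or infinite cyclic. -/
def NonElementary (G : Type*) [Group G] : Prop :=
  ∀ H : Subgroup G, H.index ≠ 0 → ∀ g : G, H ≠ Subgroup.zpowers g

/-- the orbit of `o` under the cyclic group generated by `f`. -/
def cyclicOrbit (o : Y) (f : G) : Set Y :=
  {y : Y | ∃ n : ℤ, y = f ^ n • o}

/-- `f` is a contracting element with `C`-contracting orbit: it has infinite order,
`n ↦ fⁿ • o` is a quasi-isometric embedding of `ℤ`, and `⟨f⟩ • o` is `C`-contracting. -/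
def IsContractingElt (o : Y) (C : ℝ) (f : G) : Prop :=
  (∀ n : ℤ, n ≠ 0 → f ^ n ≠ 1) ∧
  (∃ c : ℝ, 1 ≤ c ∧ ∀ m n : ℤ,
      (1 / c) * |(m : ℝ) - (n : ℝ)| - c ≤ dist (f ^ m • o) (f ^ n • o) ∧
      dist (f ^ m • o) (f ^ n • o) ≤ c * |(m : ℝ) - (n : ℝ)| + c) ∧
  IsContractingSet C (cyclicOrbit o f)

/-- `f` is a contracting element. -/
def IsContractingEltAny (o : Y) (f : G) : Prop :=
  ∃ C : ℝ, 1 ≤ C ∧ IsContractingElt o C f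

/-- the elementary group `E(f)`: elements moving `⟨f⟩ • o` a finite Hausdorff distance. -/
def EGroup (o : Y) (f : G) : Set G :=
  {g : G | EMetric.hausdorffEdist (g • cyclicOrbit o f) (cyclicOrbit o f) ≠ ⊤}

/-- the axis `Ax(f) = E(f) • o`. -/
def axisOf (o : Y) (f : G) : Set Y :=
  (fun g : G => g • o) '' EGroup o f

/-- the family of all `G`-translated axes of `h` and `k`. -/
def axesPairFam (o : Y) (h k : G) : Set (Set Y) :=
  {S | ∃ g : G, S = g • axisOf o h ∨ S = g • axisOf o k}

/-- `h` and `k` are independent contracting elements: the family of their translated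
axes has bounded projection. -/
def IndepElts (o : Y) (h k : G) : Prop :=
  ∃ B : ℝ, 0 < B ∧ ∀ U ∈ axesPairFam o h k, ∀ V ∈ axesPairFam o h k,
    U ≠ V → EMetric.diam (projSetOf U V) ≤ ENNReal.ofReal B

/-- the family of all `G`-translated axes of the triple `f₁, f₂, f₃`. -/
def axesTripleFam (o : Y) (f₁ f₂ f₃ : G) : Set (Set Y) :=
  {S | ∃ g : G, S = g • axisOf o f₁ ∨ S = g • axisOf o f₂ ∨ S = g • axisOf o f₃}

/-- `F = {f₁,f₂,f₃}` is an admissible triple with constants `C`, `B₀`: three pairwise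
independent contracting elements whose translated axes are `C`-contracting with
`B₀`-bounded projection. -/
def IsAdmissibleTriple (o : Y) (C B₀ : ℝ) (f₁ f₂ f₃ : G) : Prop :=
  f₁ ≠ f₂ ∧ f₁ ≠ f₃ ∧ f₂ ≠ f₃ ∧
  IsContractingEltAny o f₁ ∧ IsContractingEltAny o f₂ ∧ IsContractingEltAny o f₃ ∧
  IndepElts o f₁ f₂ ∧ IndepElts o f₁ f₃ ∧ IndepElts o f₂ f₃ ∧
  (∀ S ∈ axesTripleFam o f₁ f₂ f₃, IsContractingSet C S) ∧
  (∀ U ∈ axesTripleFam o f₁ f₂ f₃, ∀ V ∈ axesTripleFam o f₁ f₂ f₃,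
    U ≠ V → EMetric.diam (projSetOf U V) ≤ ENNReal.ofReal B₀)

/-- the geodesic `γ` contains an `(r,f)`-barrier at `g • o`. -/
def HasBarrier (o : Y) (r : ℝ) (f g : G) (γ : Set Y) : Prop :=
  Metric.infDist (g • o) γ ≤ r ∧ Metric.infDist ((g * f) • o) γ ≤ r

/-- the partial cone `Ω_x^F(g • o, r)`. -/
def partialCone (o x : Y) (f₁ f₂ f₃ : G) (g : G) (r : ℝ) : Set Y :=
  {z | ∃ γ : Set Y, IsGeodesicIn Y γ x z ∧
      (HasBarrier o r f₁ g γ ∨ HasBarrier o r f₂ g γ ∨ HasBarrier o r f₃ g γ)}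

/-- the partial shadow `Π_x^F(g • o, r)`: accumulation points of the partial cone in
the horofunction boundary. -/
def partialShadow (o x : Y) (f₁ f₂ f₃ : G) (g : G) (r : ℝ) : Set C(Y, ℝ) :=
  {ξ | IsHoroPoint o ξ ∧ ∃ u : ℕ → Y, (∀ n, u n ∈ partialCone o x f₁ f₂ f₃ g r) ∧
      HoroConv o u ξ}

/-- `ξ` is an `(r,F)`-conical point. -/
def IsConicalPt (o : Y) (f₁ f₂ f₃ : G) (r : ℝ) (ξ : C(Y, ℝ)) : Prop :=
  ∃ g₀ : G, Set.Infinite {g : G | ξ ∈ partialShadow o (g₀ • o) f₁ f₂ f₃ g r}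

/-- the usual cone `Ω_x(y,r)`. -/
def usualCone (x y : Y) (r : ℝ) : Set Y :=
  {z | ∃ γ : Set Y, IsGeodesicIn Y γ x z ∧ ∃ p ∈ γ, dist p y ≤ r}

/-- the usual shadow `Π_x(y,r)`. -/
def usualShadow (o x y : Y) (r : ℝ) : Set C(Y, ℝ) :=
  {ξ | IsHoroPoint o ξ ∧ ∃ u : ℕ → Y, (∀ n, u n ∈ usualCone x y r) ∧ HoroConv o u ξ}

/-- the set `Λ_c(G)` of conical points of the action. -/
def conicalSet (G : Type*) {Y : Type*} [Group G] [MulAction G Y] [MetricSpace Y]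
    (o : Y) : Set C(Y, ℝ) :=
  {ξ | ∃ r : ℝ, 0 < r ∧ ∃ g₀ : G, ∃ u : ℕ → G,
      Filter.Tendsto (fun n => dist o (u n • o)) atTop atTop ∧
      ∀ n, ξ ∈ usualShadow o (g₀ • o) (u n • o) r}

/-- the attracting fixed-point set `[h⁺]`: the locus of the accumulation points of
`{hⁿ o : n > 0}` in the horofunction boundary. -/
def attrFix (o : Y) (h : G) : Set C(Y, ℝ) :=
  locus o (accPoints o (fun n : ℕ => h ^ (n + 1) • o))

/-- the repelling fixed-point set `[h⁻]`. -/
def repFix (o : Y) (h : G) : Set C(Y, ℝ) :=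
  locus o (accPoints o (fun n : ℕ => h ^ (-(n + 1) : ℤ) • o))

/-- the limit set `Λ G y` of the orbit `G • y` in the horofunction boundary. -/
def orbitLimitSet (G : Type*) {Y : Type*} [Group G] [MulAction G Y] [MetricSpace Y]
    (o y : Y) : Set C(Y, ℝ) :=
  {ξ | IsHoroPoint o ξ ∧ ∃ u : ℕ → G,
      Filter.Tendsto (fun n => busemannCM o (u n • y)) atTop (nhds ξ)}

/-- the action of an isometry `g` on horofunctions. -/
def horoAct [ContinuousConstSMul G Y] (o : Y) (g : G) (ξ : C(Y, ℝ)) : C(Y, ℝ) :=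
  ⟨fun y => ξ (g⁻¹ • y) - ξ (g⁻¹ • o),
    (ξ.continuous.comp (continuous_const_smul g⁻¹)).sub continuous_const⟩

/-- the number of orbit points of `Γ ⊆ G` in the closed ball of radius `R` around `o`. -/
def orbitCount (G : Type*) {Y : Type*} [Group G] [MulAction G Y] [MetricSpace Y]
    (o : Y) (Γ : Set G) (R : ℝ) : ℕ :=
  Nat.card {g : G // g ∈ Γ ∧ dist o (g • o) ≤ R}

/-- the critical exponent `ω_Γ` of a subset `Γ ⊆ G`. -/
def critExp (G : Type*) {Y : Type*} [Group G] [MulAction G Y] [MetricSpace Y]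
    (o : Y) (Γ : Set G) : ℝ :=
  Filter.limsup (fun R : ℝ => Real.log (orbitCount G o Γ R) / R) atTop

/-- an `ω`-dimensional `G`-equivariant conformal density on the horofunction boundary:
a family of finite measures supported on `∂_h Y`, normalized at `o`, `G`-equivariant,
with conformal derivative `dμ_x/dμ_y(ξ) = e^{-ω·B_ξ(x,y)}`. -/
def IsConformalDensity (G : Type*) {Y : Type*} [Group G] [MulAction G Y] [MetricSpace Y]
    [ContinuousConstSMul G Y] [MeasurableSpace C(Y, ℝ)]
    (o : Y) (ω : ℝ) (μ : Y → MeasureTheory.Measure C(Y, ℝ)) : Prop :=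
  (∀ x : Y, MeasureTheory.IsFiniteMeasure (μ x)) ∧
  (∀ x : Y, μ x {ξ : C(Y, ℝ) | ¬ IsHoroPoint o ξ} = 0) ∧
  μ o Set.univ = 1 ∧
  (∀ g : G, ∀ x : Y, MeasureTheory.Measure.map (horoAct o g) (μ x) = μ (g • x)) ∧
  (∀ x y : Y, μ x = (μ y).withDensity
      (fun ξ : C(Y, ℝ) => ENNReal.ofReal (Real.exp (-ω * (ξ x - ξ y)))))

end GroupAction

lemma busemann_continuous {Y : Type*} [MetricSpace Y] (o : Y) :
    Continuous (busemannCM o) := by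
  apply ContinuousMap.continuous_of_continuous_uncurry
  exact (continuous_snd.dist continuous_fst).sub (continuous_const.dist continuous_fst)

/-- If a sequence converges to a horofunction boundary point, it escapes to infinity. -/
lemma horo_tendsto_infty {Y : Type*} [MetricSpace Y] [ProperSpace Y] (o : Y) (x : ℕ → Y)
    (ξ : C(Y, ℝ)) (hξ : IsHoroPoint o ξ) (hconv : HoroConv o x ξ) :
    Filter.Tendsto (fun n => dist o (x n)) atTop atTop := by
  by_contra h
  rw [Filter.tendsto_atTop] at h
  push_neg at h
  obtain ⟨R, hR⟩ := h
  obtain ⟨φ, hφmono, hφ⟩ := Filter.extraction_of_frequently_atTop hR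
  have hball : ∀ k, (x ∘ φ) k ∈ Metric.closedBall o R := by
    intro k
    exact Metric.mem_closedBall'.mpr (hφ k).le
  obtain ⟨a, _, ψ, hψmono, hψconv⟩ :=
    (isCompact_closedBall o R).tendsto_subseq hball
  have h1 : Filter.Tendsto (fun k => busemannCM o ((x ∘ φ ∘ ψ) k)) atTop
      (nhds (busemannCM o a)) :=
    ((busemann_continuous o).tendsto a).comp hψconv
  have h2 : Filter.Tendsto (fun k => busemannCM o ((x ∘ φ ∘ ψ) k)) atTop (nhds ξ) :=
    hconv.comp (hφmono.comp hψmono).tendsto_atTop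
  exact hξ.2 a (tendsto_nhds_unique h2 h1)

/-- Key geometric lemma: if `xx` is a projection of `yy` to a contracting set `X`, and
`xx` is far from the projection of `w` to `X`, then `xx` is near any geodesic `[w, yy]`. -/
lemma key_contracting {Y : Type*} [MetricSpace Y] [ProperSpace Y]
    (hY : GeodesicSpace Y) (C : ℝ) (hC : 0 ≤ C)
    (X : Set Y) (hXcl : IsClosed X) (hXne : X.Nonempty) (hXcon : IsContractingSet C X)
    (w yy xx : Y) (hx : xx ∈ projSet X yy)
    (hfar : ∀ w' ∈ projSet X w, C < dist xx w') :
    dist w xx + dist xx yy ≤ dist w yy + 4 * C := by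
  obtain ⟨γ, f, hf0, hfL, hiso, hγ⟩ := hY yy w
  set L := dist yy w with hLdef
  have hL0 : (0 : ℝ) ≤ L := dist_nonneg
  have hwyy : dist w yy = L := dist_comm w yy
  -- the distance-to-X function along the geodesic
  set g : ℝ → ℝ := fun t => Metric.infDist (f t) X with hgdef
  by_cases hT : ∃ t ∈ Set.Icc (0 : ℝ) L, g t ≤ C
  · -- the geodesic enters the C-neighborhood of X
    set T : Set ℝ := {t | t ∈ Set.Icc (0 : ℝ) L ∧ g t ≤ C} with hTdef
    have hTne : T.Nonempty := hT
    have hTbdd : BddBelow T := ⟨0, fun t ht => ht.1.1⟩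
    -- g is 1-Lipschitz on the interval
    have hlip : ∀ s ∈ Set.Icc (0 : ℝ) L, ∀ t ∈ Set.Icc (0 : ℝ) L,
        g s ≤ g t + |s - t| := by
      intro s hs t ht
      calc g s ≤ g t + dist (f s) (f t) := Metric.infDist_le_infDist_add_dist
        _ = g t + |s - t| := by rw [hiso s hs t ht]
    have hTcl : IsClosed T := by
      have hcont : ContinuousOn g (Set.Icc (0 : ℝ) L) := by
        have : LipschitzOnWith 1 g (Set.Icc (0 : ℝ) L) := by
          apply LipschitzOnWith.of_dist_le_mul
          intro s hs t ht
          rw [Real.dist_eq, Real.dist_eq]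
          simp only [NNReal.coe_one, one_mul]
          rw [abs_sub_le_iff]
          constructor
          · linarith [hlip s hs t ht, abs_nonneg (s - t), le_abs_self (s - t)]
          · have := hlip t ht s hs
            rw [abs_sub_comm] at this
            linarith
        exact this.continuousOn
      have : T = Set.Icc (0 : ℝ) L ∩ g ⁻¹' Set.Iic C := by
        ext t; simp [hTdef, Set.mem_setOf_eq, Set.mem_Iic]
      rw [this]
      exact hcont.preimage_isClosed_of_isClosed isClosed_Icc isClosed_Iic
    set t₀ := sInf T with ht₀def
    have ht₀mem : t₀ ∈ T := hTcl.csInf_mem hTne hTbdd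
    have ht₀Icc : t₀ ∈ Set.Icc (0 : ℝ) L := ht₀mem.1
    have hgt₀ : g t₀ ≤ C := ht₀mem.2
    have hlt : ∀ t ∈ Set.Icc (0 : ℝ) L, t < t₀ → C < g t := by
      intro t ht htlt
      by_contra hle
      push_neg at hle
      exact absurd (csInf_le hTbdd ⟨ht, hle⟩) (not_le.mpr htlt)
    rcases eq_or_lt_of_le ht₀Icc.1 with h0 | h0
    · -- t₀ = 0 : yy itself is C-close to X
      have hyyX : dist yy xx ≤ C := by
        have : g 0 ≤ C := by rw [h0]; exact hgt₀
        rw [hgdef] at this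
        simp only [hf0] at this
        rw [hx.2]
        exact this
      have h1 : dist w xx ≤ dist w yy + dist yy xx := dist_triangle w yy xx
      have h2 : dist xx yy = dist yy xx := dist_comm xx yy
      linarith
    · -- t₀ > 0 : the initial subsegment stays C-far from X
      have hgt₀ge : C ≤ g t₀ := by
        by_contra hl
        push_neg at hl
        set ε := min t₀ ((C - g t₀) / 2) with hεdef
        have hε0 : 0 < ε := lt_min h0 (by linarith)
        have hεt : ε ≤ t₀ := min_le_left _ _
        have hεC : ε ≤ (C - g t₀) / 2 := min_le_right _ _
        have hsIcc : t₀ - ε ∈ Set.Icc (0 : ℝ) L :=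
          ⟨by linarith, by linarith [ht₀Icc.2]⟩
        have hCs : C < g (t₀ - ε) := hlt _ hsIcc (by linarith)
        have := hlip (t₀ - ε) hsIcc t₀ ht₀Icc
        rw [show t₀ - ε - t₀ = -ε by ring, abs_neg, abs_of_pos hε0] at this
        linarith
      have hge : ∀ t ∈ Set.Icc (0 : ℝ) t₀, C ≤ g t := by
        intro t ht
        rcases eq_or_lt_of_le ht.2 with heq | hlt'
        · rw [heq]; exact hgt₀ge
        · exact le_of_lt (hlt t ⟨ht.1, le_trans ht.2 ht₀Icc.2⟩ hlt')
      -- the subsegment from yy to f t₀ is a geodesic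
      have hdyy : dist yy (f t₀) = t₀ := by
        have := hiso 0 ⟨le_refl 0, hL0⟩ t₀ ht₀Icc
        rw [hf0, zero_sub, abs_neg, abs_of_nonneg ht₀Icc.1] at this
        exact this
      have hgeo' : IsGeodesicIn Y (f '' Set.Icc (0 : ℝ) t₀) yy (f t₀) := by
        refine ⟨f, hf0, ?_, ?_, ?_⟩
        · rw [hdyy]
        · rw [hdyy]
          intro s hs t ht
          exact hiso s ⟨hs.1, le_trans hs.2 ht₀Icc.2⟩ t ⟨ht.1, le_trans ht.2 ht₀Icc.2⟩
        · rw [hdyy]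
      have hdiam : EMetric.diam (projSetOf X (f '' Set.Icc (0 : ℝ) t₀)) ≤
          ENNReal.ofReal C := by
        apply hXcon yy (f t₀) _ hgeo'
        intro p hp
        obtain ⟨t, ht, rfl⟩ := hp
        exact hge t ht
      obtain ⟨q, hqX, hqd⟩ := hXcl.exists_infDist_eq_dist hXne (f t₀)
      have hq : q ∈ projSet X (f t₀) := ⟨hqX, hqd.symm⟩
      have hxxmem : xx ∈ projSetOf X (f '' Set.Icc (0 : ℝ) t₀) :=
        Set.mem_biUnion ⟨0, ⟨le_refl 0, ht₀Icc.1⟩, hf0⟩ hx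
      have hqmem : q ∈ projSetOf X (f '' Set.Icc (0 : ℝ) t₀) :=
        Set.mem_biUnion ⟨t₀, ⟨ht₀Icc.1, le_refl t₀⟩, rfl⟩ hq
      have hxxq : dist xx q ≤ C := by
        have := le_trans (EMetric.edist_le_diam_of_mem hxxmem hqmem) hdiam
        rw [dist_edist]
        exact ENNReal.toReal_le_of_le_ofReal hC this
      have hpq : dist (f t₀) q ≤ C := by rw [← hqd]; exact hgt₀
      have hxxp : dist xx (f t₀) ≤ 2 * C := by
        calc dist xx (f t₀) ≤ dist xx q + dist q (f t₀) := dist_triangle _ _ _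
          _ = dist xx q + dist (f t₀) q := by rw [dist_comm q]
          _ ≤ 2 * C := by linarith
      have hwp : dist w (f t₀) = L - t₀ := by
        have := hiso L ⟨hL0, le_refl L⟩ t₀ ht₀Icc
        rw [hfL, abs_of_nonneg (by linarith [ht₀Icc.2])] at this
        exact this
      have h1 : dist w xx ≤ dist w (f t₀) + dist (f t₀) xx := dist_triangle _ _ _
      have h2 : dist xx yy ≤ dist xx (f t₀) + dist (f t₀) yy := dist_triangle _ _ _
      have h3 : dist (f t₀) xx = dist xx (f t₀) := dist_comm _ _
      have h4 : dist (f t₀) yy = t₀ := by rw [dist_comm]; exact hdyy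
      linarith
  · -- the whole geodesic stays C-far from X : contradiction with hfar
    push_neg at hT
    exfalso
    have hdiam : EMetric.diam (projSetOf X γ) ≤ ENNReal.ofReal C := by
      apply hXcon yy w γ ⟨f, hf0, hfL, hiso, hγ⟩
      intro p hp
      rw [hγ] at hp
      obtain ⟨t, ht, rfl⟩ := hp
      exact le_of_lt (hT t ht)
    obtain ⟨w', hw'X, hw'd⟩ := hXcl.exists_infDist_eq_dist hXne w
    have hw' : w' ∈ projSet X w := ⟨hw'X, hw'd.symm⟩
    have hxxmem : xx ∈ projSetOf X γ :=
      Set.mem_biUnion (by rw [hγ]; exact ⟨0, ⟨le_refl 0, hL0⟩, hf0⟩) hx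
    have hw'mem : w' ∈ projSetOf X γ :=
      Set.mem_biUnion (by rw [hγ]; exact ⟨L, ⟨hL0, le_refl L⟩, hfL⟩) hw'
    have : dist xx w' ≤ C := by
      have := le_trans (EMetric.edist_le_diam_of_mem hxxmem hw'mem) hdiam
      rw [dist_edist]
      exact ENNReal.toReal_le_of_le_ofReal hC this
    exact absurd this (not_le.mpr (hfar w' hw'))

/-- if `X` is a `C`-contracting closed subset, `y n → η ∈ ∂_h Y`, and
`x n ∈ π_X(y n)` converge to `ξ ∈ ∂_h Y`, then `‖b_ξ - b_η‖_∞ ≤ 4C`. -/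
theorem statement0 {Y : Type*} [MetricSpace Y] [ProperSpace Y]
    (hY : GeodesicSpace Y) (o : Y) (C : ℝ) (hC : 1 ≤ C)
    (X : Set Y) (hXcl : IsClosed X) (hXcon : IsContractingSet C X)
    (y : ℕ → Y) (η : C(Y, ℝ)) (hη : IsHoroPoint o η) (hyconv : HoroConv o y η)
    (x : ℕ → Y) (hxproj : ∀ n, x n ∈ projSet X (y n))
    (ξ : C(Y, ℝ)) (hξ : IsHoroPoint o ξ) (hxconv : HoroConv o x ξ) :
    ∀ z : Y, |ξ z - η z| ≤ 4 * C := by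
  intro z
  have hC0 : (0 : ℝ) ≤ C := by linarith
  have hXne : X.Nonempty := ⟨x 0, (hxproj 0).1⟩
  have hx0X : x 0 ∈ X := (hxproj 0).1
  have htend : Filter.Tendsto (fun n => dist o (x n)) atTop atTop :=
    horo_tendsto_infty o x ξ hξ hxconv
  -- eventually the key geometric lemma applies at both z and o
  have hfargen : ∀ w : Y, ∀ᶠ n in atTop, ∀ w' ∈ projSet X w, C < dist (x n) w' := by
    intro w
    filter_upwards [htend.eventually_gt_atTop (C + dist o w + dist w (x 0))] with n hn
    intro w' hw'
    have h1 : dist w w' ≤ dist w (x 0) := by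
      rw [hw'.2]
      exact Metric.infDist_le_dist_of_mem hx0X
    have h2 : dist o (x n) ≤ dist o w' + dist w' (x n) := dist_triangle _ _ _
    have h3 : dist o w' ≤ dist o w + dist w w' := dist_triangle _ _ _
    have h4 : dist w' (x n) = dist (x n) w' := dist_comm _ _
    linarith
  have hev : ∀ᶠ n in atTop,
      |busemannCM o (x n) z - busemannCM o (y n) z| ≤ 4 * C := by
    filter_upwards [hfargen z, hfargen o] with n hfz hfo
    have hkz : dist z (x n) + dist (x n) (y n) ≤ dist z (y n) + 4 * C :=
      key_contracting hY C hC0 X hXcl hXne hXcon z (y n) (x n) (hxproj n) hfz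
    have hko : dist o (x n) + dist (x n) (y n) ≤ dist o (y n) + 4 * C :=
      key_contracting hY C hC0 X hXcl hXne hXcon o (y n) (x n) (hxproj n) hfo
    have htz : dist z (y n) ≤ dist z (x n) + dist (x n) (y n) := dist_triangle _ _ _
    have hto : dist o (y n) ≤ dist o (x n) + dist (x n) (y n) := dist_triangle _ _ _
    have hbx : busemannCM o (x n) z = dist z (x n) - dist o (x n) := rfl
    have hby : busemannCM o (y n) z = dist z (y n) - dist o (y n) := rfl
    rw [hbx, hby, abs_le]
    constructor <;> linarith
  have h1 : Filter.Tendsto (fun n => busemannCM o (x n) z) atTop (nhds (ξ z)) :=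
    ((continuous_eval_const z).tendsto ξ).comp hxconv
  have h2 : Filter.Tendsto (fun n => busemannCM o (y n) z) atTop (nhds (η z)) :=
    ((continuous_eval_const z).tendsto η).comp hyconv
  have habs : Filter.Tendsto
      (fun n => |busemannCM o (x n) z - busemannCM o (y n) z|) atTop
      (nhds |ξ z - η z|) := (h1.sub h2).abs
  exact le_of_tendsto habs hev

end ConfDyn
end
end

section
/- Let ξ, η ∈ ∂_hY with ‖b_ξ − b_η‖_∞ < ∞. If x_n → ξ and y_n → η are sequences in Y, then the geodesic segments between x_n and y_n exit every bounded set: for every z ∈ Y and every choice of geodesics γ_n from x_n to y_n one has d(z, γ_n) → ∞. In other words, every point of the horofunction boundary of a proper geodesic metric space is non-pinched. -/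
open Metric Filter Topology Set MeasureTheory Pointwise

noncomputable section

namespace ConfDyn

lemma busemann_apply {Y : Type*} [MetricSpace Y] (o y w : Y) :
    busemannCM o y w = dist w y - dist o y := rfl

lemma busemann_tendsto {Y : Type*} [MetricSpace Y] (o : Y) {u : ℕ → Y} {a : Y}
    (h : Tendsto u atTop (𝓝 a)) :
    Tendsto (fun n => busemannCM o (u n)) atTop (𝓝 (busemannCM o a)) := by
  rw [ContinuousMap.tendsto_iff_forall_isCompact_tendstoUniformlyOn]
  intro K hK
  rw [Metric.tendstoUniformlyOn_iff]
  intro ε hε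
  filter_upwards [Metric.tendsto_nhds.1 h (ε / 2) (by linarith)] with n hn w _
  have h1 : |dist w a - dist w (u n)| ≤ dist a (u n) := by
    rw [dist_comm w a, dist_comm w (u n)]; exact abs_dist_sub_le _ _ _
  have h2 : |dist o (u n) - dist o a| ≤ dist (u n) a := by
    rw [dist_comm o (u n), dist_comm o a]; exact abs_dist_sub_le _ _ _
  have hda : dist a (u n) < ε / 2 := by rw [dist_comm]; exact hn
  have h1' := abs_le.1 h1
  have h2' := abs_le.1 h2
  rw [Real.dist_eq]
  simp only [busemann_apply]
  rw [abs_lt]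
  constructor <;> [nlinarith [hn]; nlinarith [hn]]

lemma horo_dist_tendsto {Y : Type*} [MetricSpace Y] [ProperSpace Y] {o : Y}
    {ξ : C(Y, ℝ)} (hξ : IsHoroPoint o ξ) {x : ℕ → Y} (hx : HoroConv o x ξ) :
    Tendsto (fun n => dist o (x n)) atTop atTop := by
  by_contra hcon
  rw [Filter.tendsto_atTop] at hcon
  push_neg at hcon
  obtain ⟨T, hT⟩ := hcon
  have hfreq : ∃ᶠ n in atTop, dist o (x n) < T :=
    (Filter.not_eventually.1 hT).mono fun n hn => not_not.1 hn
  obtain ⟨φ, hφ, hφT⟩ := Filter.extraction_of_frequently_atTop hfreq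
  have hmem : ∀ n, (x ∘ φ) n ∈ closedBall o T := fun n => by
    simp [mem_closedBall, dist_comm]
    exact le_of_lt (hφT n)
  obtain ⟨a, -, ψ, hψ, hconv⟩ := (isCompact_closedBall o T).tendsto_subseq hmem
  have h1 : Tendsto (fun n => busemannCM o (x (φ (ψ n)))) atTop (𝓝 (busemannCM o a)) :=
    busemann_tendsto o hconv
  have h2 : Tendsto (fun n => busemannCM o (x (φ (ψ n)))) atTop (𝓝 ξ) :=
    hx.comp ((hφ.comp hψ).tendsto_atTop)
  exact hξ.2 a (tendsto_nhds_unique h2 h1)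

lemma exists_horo_small {Y : Type*} [MetricSpace Y] [ProperSpace Y]
    (hY : GeodesicSpace Y) {o : Y} {ξ : C(Y, ℝ)} (hξ : IsHoroPoint o ξ)
    {x : ℕ → Y} (hx : HoroConv o x ξ) (c : ℝ) : ∃ p : Y, ξ p ≤ c := by
  set t : ℝ := max 0 (1 - c) with ht
  have ht0 : 0 ≤ t := le_max_left _ _
  have h1 : ∀ᶠ n in atTop, t ≤ dist o (x n) :=
    (horo_dist_tendsto hξ hx).eventually_ge_atTop t
  have h2 : ∀ᶠ n in atTop, ∀ w ∈ closedBall o t, dist (ξ w) (busemannCM o (x n) w) < 1 := by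
    have := (ContinuousMap.tendsto_iff_forall_isCompact_tendstoUniformlyOn.1 hx)
      (closedBall o t) (isCompact_closedBall o t)
    exact Metric.tendstoUniformlyOn_iff.1 this 1 one_pos
  obtain ⟨n, hn1, hn2⟩ := (h1.and h2).exists
  obtain ⟨γ, f, hf0, hfD, hiso, -⟩ := hY o (x n)
  have htD : t ∈ Icc (0 : ℝ) (dist o (x n)) := ⟨ht0, hn1⟩
  have hDD : dist o (x n) ∈ Icc (0 : ℝ) (dist o (x n)) := ⟨dist_nonneg, le_refl _⟩
  have h00 : (0 : ℝ) ∈ Icc (0 : ℝ) (dist o (x n)) := ⟨le_refl _, dist_nonneg⟩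
  refine ⟨f t, ?_⟩
  have hmem : f t ∈ closedBall o t := by
    have hd := hiso 0 h00 t htD
    rw [hf0] at hd
    rw [mem_closedBall, dist_comm, hd]
    rw [abs_of_nonpos (by linarith : (0 : ℝ) - t ≤ 0)]
    linarith
  have hb : busemannCM o (x n) (f t) = -t := by
    have hd := hiso t htD (dist o (x n)) hDD
    rw [hfD] at hd
    rw [busemann_apply, hd, abs_of_nonpos (by linarith : t - dist o (x n) ≤ 0)]
    ring
  have h3 := hn2 (f t) hmem
  rw [hb, Real.dist_eq] at h3
  have h4 := (abs_lt.1 h3).2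
  have h5 : 1 - c ≤ t := le_max_right _ _
  linarith

/-- every point of the horofunction boundary of a proper geodesic space
is non-pinched: if `ξ, η ∈ ∂_h Y` have finite difference, `x n → ξ` and `y n → η`,
then any choice of geodesics from `x n` to `y n` exits every bounded set. -/
theorem statement3 {Y : Type*} [MetricSpace Y] [ProperSpace Y]
    (hY : GeodesicSpace Y) (o : Y)
    (ξ η : C(Y, ℝ)) (hξ : IsHoroPoint o ξ) (hη : IsHoroPoint o η) (hfd : FinDiff ξ η)
    (x y : ℕ → Y) (hx : HoroConv o x ξ) (hy : HoroConv o y η)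
    (γ : ℕ → Set Y) (hγ : ∀ n, IsGeodesicIn Y (γ n) (x n) (y n)) :
    ∀ z : Y, Filter.Tendsto (fun n => Metric.infDist z (γ n)) atTop atTop := by
  intro z
  rw [Filter.tendsto_atTop]
  intro M
  obtain ⟨K, hK⟩ := hfd
  obtain ⟨w, hw⟩ := exists_horo_small hY hξ hx ((ξ z + η z - 2 * M - 1 - K) / 2)
  have hηw : η w ≤ ξ w + K := by
    have := (abs_le.1 (hK w)).1; linarith
  have evxz : Tendsto (fun n => busemannCM o (x n) z) atTop (𝓝 (ξ z)) :=
    ((continuous_eval_const z).tendsto ξ).comp hx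
  have evxw : Tendsto (fun n => busemannCM o (x n) w) atTop (𝓝 (ξ w)) :=
    ((continuous_eval_const w).tendsto ξ).comp hx
  have evyz : Tendsto (fun n => busemannCM o (y n) z) atTop (𝓝 (η z)) :=
    ((continuous_eval_const z).tendsto η).comp hy
  have evyw : Tendsto (fun n => busemannCM o (y n) w) atTop (𝓝 (η w)) :=
    ((continuous_eval_const w).tendsto η).comp hy
  have hA : Tendsto (fun n => (busemannCM o (x n) z + busemannCM o (y n) z)
      - (busemannCM o (x n) w + busemannCM o (y n) w)) atTop
      (𝓝 ((ξ z + η z) - (ξ w + η w))) := (evxz.add evyz).sub (evxw.add evyw)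
  have hL : 2 * M < (ξ z + η z) - (ξ w + η w) := by linarith
  filter_upwards [hA.eventually (eventually_gt_nhds hL)] with n hn
  obtain ⟨f, hf0, hfD, hiso, hγeq⟩ := hγ n
  have h00 : (0 : ℝ) ∈ Icc (0 : ℝ) (dist (x n) (y n)) := ⟨le_refl _, dist_nonneg⟩
  have hDD : dist (x n) (y n) ∈ Icc (0 : ℝ) (dist (x n) (y n)) := ⟨dist_nonneg, le_refl _⟩
  have hne : (γ n).Nonempty := ⟨x n, by rw [hγeq]; exact ⟨0, h00, hf0⟩⟩
  by_contra hcon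
  push_neg at hcon
  obtain ⟨p, hp, hpz⟩ := (Metric.infDist_lt_iff hne).1 hcon
  rw [hγeq] at hp
  obtain ⟨s, hs, rfl⟩ := hp
  -- p = f s lies on the geodesic, so distances to the endpoints add up
  have h1 := hiso 0 h00 s hs
  have h2 := hiso s hs (dist (x n) (y n)) hDD
  rw [hf0] at h1; rw [hfD] at h2
  rw [abs_of_nonpos (by linarith [hs.1] : (0 : ℝ) - s ≤ 0)] at h1
  rw [abs_of_nonpos (by linarith [hs.2] : s - dist (x n) (y n) ≤ 0)] at h2
  have hsum : dist (x n) (f s) + dist (f s) (y n) = dist (x n) (y n) := by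
    rw [h1, h2]; ring
  -- the Busemann sum at a geodesic point is minimal
  have htri : dist (x n) (y n) ≤ dist w (x n) + dist w (y n) := by
    rw [dist_comm w (x n)]; exact dist_triangle _ _ _
  have key : busemannCM o (x n) (f s) + busemannCM o (y n) (f s)
      ≤ busemannCM o (x n) w + busemannCM o (y n) w := by
    simp only [busemann_apply]
    have : dist (f s) (x n) + dist (f s) (y n) = dist (x n) (y n) := by
      rw [dist_comm (f s) (x n)]; exact hsum
    linarith
  -- 1-Lipschitz estimates
  have lip1 : busemannCM o (x n) z - dist z (f s) ≤ busemannCM o (x n) (f s) := by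
    simp only [busemann_apply]
    have := (abs_le.1 (abs_dist_sub_le z (f s) (x n))).2
    linarith
  have lip2 : busemannCM o (y n) z - dist z (f s) ≤ busemannCM o (y n) (f s) := by
    simp only [busemann_apply]
    have := (abs_le.1 (abs_dist_sub_le z (f s) (y n))).2
    linarith
  linarith

end ConfDyn
end
end

section
/- Let U ⊆ Y be a C-contracting closed subset, let r ≥ 100C, and let α be a geodesic with ‖N_r(U) ∩ α‖ > 3r. Let x, y ∈ α ∩ N_r(U) be the entry and exit points of α in N_r(U), i.e. d(x,y) = ‖N_r(U) ∩ α‖ with x preceding y along α. Then α meets N_C(U); the entry and exit points of α in N_C(U) are within distance 3r/2 of x and y respectively; ‖N_C(U) ∩ α‖ ≥ ‖N_r(U) ∩ α‖ − 3r; and d_U(α⁻, α⁺) ≥ ‖N_r(U) ∩ α‖ − 4r, where α⁻, α⁺ denote the endpoints of α. -/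
open Metric Filter Topology Set MeasureTheory Pointwise

noncomputable section

namespace ConfDyn

lemma mem_cth {Y : Type*} [MetricSpace Y] {δ : ℝ} (hδ : 0 ≤ δ) {U : Set Y} (hne : U.Nonempty)
    (x : Y) : x ∈ Metric.cthickening δ U ↔ Metric.infDist x U ≤ δ := by
  rw [Metric.mem_cthickening_iff, Metric.infDist,
    ENNReal.le_ofReal_iff_toReal_le (Metric.infEdist_ne_top hne) hδ]

lemma projSet_nonempty' {Y : Type*} [MetricSpace Y] [ProperSpace Y] {U : Set Y}
    (hUcl : IsClosed U) (hne : U.Nonempty) (x : Y) : (projSet U x).Nonempty := by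
  obtain ⟨z, hz, hdz⟩ := hUcl.exists_infDist_eq_dist hne x
  exact ⟨z, hz, hdz.symm⟩

lemma subgeodesic {Y : Type*} [MetricSpace Y] {f : ℝ → Y} {L : ℝ}
    (hiso : ∀ s ∈ Set.Icc (0:ℝ) L, ∀ t ∈ Set.Icc (0:ℝ) L, dist (f s) (f t) = |s - t|)
    {s t : ℝ} (hs : s ∈ Set.Icc (0:ℝ) L) (ht : t ∈ Set.Icc (0:ℝ) L) (hst : s ≤ t) :
    IsGeodesicIn Y (f '' Set.Icc s t) (f s) (f t) := by
  have hd : dist (f s) (f t) = t - s := by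
    rw [hiso s hs t ht, abs_sub_comm, abs_of_nonneg (by linarith)]
  have hmem : ∀ w ∈ Set.Icc (0:ℝ) (t - s), s + w ∈ Set.Icc (0:ℝ) L := by
    intro w hw
    exact ⟨by linarith [hs.1, hw.1], by linarith [ht.2, hw.2]⟩
  refine ⟨fun w => f (s + w), by simp, ?_, ?_, ?_⟩
  · show f (s + dist (f s) (f t)) = f t
    rw [hd, show s + (t - s) = t by ring]
  · intro w1 hw1 w2 hw2
    rw [hd] at hw1 hw2
    rw [hiso _ (hmem w1 hw1) _ (hmem w2 hw2)]
    congr 1; ring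
  · rw [hd]
    ext x
    simp only [Set.mem_image, Set.mem_Icc]
    constructor
    · rintro ⟨w, hw, rfl⟩
      exact ⟨w - s, ⟨by linarith [hw.1], by linarith [hw.2]⟩,
        by rw [show s + (w - s) = w by ring]⟩
    · rintro ⟨w, hw, rfl⟩
      exact ⟨s + w, ⟨by linarith [hw.1], by linarith [hw.2]⟩, rfl⟩

lemma proj_close {Y : Type*} [MetricSpace Y] {C : ℝ} (hC0 : 0 ≤ C) {U : Set Y}
    (hUcon : IsContractingSet C U) {f : ℝ → Y} {L : ℝ}
    (hiso : ∀ s ∈ Set.Icc (0:ℝ) L, ∀ t ∈ Set.Icc (0:ℝ) L, dist (f s) (f t) = |s - t|)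
    {s t : ℝ} (hs : s ∈ Set.Icc (0:ℝ) L) (ht : t ∈ Set.Icc (0:ℝ) L) (hst : s ≤ t)
    (hfar : ∀ w ∈ Set.Icc s t, C ≤ Metric.infDist (f w) U)
    {p q : Y} (hp : p ∈ projSet U (f s)) (hq : q ∈ projSet U (f t)) :
    dist p q ≤ C := by
  have hgeo := subgeodesic hiso hs ht hst
  have hbd := hUcon (f s) (f t) _ hgeo (by rintro x ⟨w, hw, rfl⟩; exact hfar w hw)
  have hp' : p ∈ projSetOf U (f '' Set.Icc s t) :=
    Set.mem_biUnion (Set.mem_image_of_mem f ⟨le_refl s, hst⟩) hp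
  have hq' : q ∈ projSetOf U (f '' Set.Icc s t) :=
    Set.mem_biUnion (Set.mem_image_of_mem f ⟨hst, le_refl t⟩) hq
  rw [← edist_le_ofReal hC0]
  exact le_trans (EMetric.edist_le_diam_of_mem hp' hq') hbd

/-- entry/exit points of a geodesic in the `C`-neighborhood of a
contracting set, compared with its entry/exit points in the `r`-neighborhood. -/
theorem statement5 {Y : Type*} [MetricSpace Y] [ProperSpace Y]
    (hY : GeodesicSpace Y) (C r : ℝ) (hC : 1 ≤ C) (hr : 100 * C ≤ r)
    (U : Set Y) (hUcl : IsClosed U) (hUcon : IsContractingSet C U)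
    (a b : Y) (f : ℝ → Y) (hf0 : f 0 = a) (hfl : f (dist a b) = b)
    (hiso : ∀ s ∈ Set.Icc (0 : ℝ) (dist a b), ∀ t ∈ Set.Icc (0 : ℝ) (dist a b),
      dist (f s) (f t) = |s - t|)
    (α : Set Y) (hα : α = f '' Set.Icc (0 : ℝ) (dist a b))
    (hbig : ENNReal.ofReal (3 * r) < EMetric.diam (Metric.cthickening r U ∩ α))
    (s t : ℝ) (hs : s ∈ Set.Icc (0 : ℝ) (dist a b)) (ht : t ∈ Set.Icc (0 : ℝ) (dist a b))
    (hst : s ≤ t)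
    (hsmem : f s ∈ Metric.cthickening r U) (htmem : f t ∈ Metric.cthickening r U)
    (hmax : ENNReal.ofReal (dist (f s) (f t)) = EMetric.diam (Metric.cthickening r U ∩ α)) :
    (∃ u ∈ Set.Icc (0 : ℝ) (dist a b), ∃ v ∈ Set.Icc (0 : ℝ) (dist a b), u ≤ v ∧
      f u ∈ Metric.cthickening C U ∧ f v ∈ Metric.cthickening C U ∧
      (∀ w ∈ Set.Icc (0 : ℝ) (dist a b), f w ∈ Metric.cthickening C U → u ≤ w ∧ w ≤ v) ∧
      dist (f u) (f s) ≤ 3 * r / 2 ∧ dist (f v) (f t) ≤ 3 * r / 2) ∧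
    EMetric.diam (Metric.cthickening r U ∩ α) ≤
      EMetric.diam (Metric.cthickening C U ∩ α) + ENNReal.ofReal (3 * r) ∧
    EMetric.diam (Metric.cthickening r U ∩ α) ≤ projDist U a b + ENNReal.ofReal (4 * r) := by
  set L := dist a b with hL
  have hC0 : (0:ℝ) ≤ C := by linarith
  have hr0 : (0:ℝ) < r := by linarith
  have hCr : C ≤ r := by linarith
  have hUne : U.Nonempty := by
    by_contra h
    rw [Set.not_nonempty_iff_eq_empty] at h
    rw [h, Metric.cthickening_empty, Set.empty_inter] at hbig
    unfold EMetric.diam at hbig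
    rw [EMetric.diam_empty] at hbig
    exact ENNReal.not_lt_zero hbig
  have memC : ∀ x : Y, x ∈ Metric.cthickening C U ↔ Metric.infDist x U ≤ C :=
    mem_cth hC0 hUne
  have memR : ∀ x : Y, x ∈ Metric.cthickening r U ↔ Metric.infDist x U ≤ r :=
    mem_cth hr0.le hUne
  have hds : Metric.infDist (f s) U ≤ r := (memR _).1 hsmem
  have hdt : Metric.infDist (f t) U ≤ r := (memR _).1 htmem
  have hdist_st : dist (f s) (f t) = t - s := by
    rw [hiso s hs t ht, abs_sub_comm, abs_of_nonneg (by linarith)]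
  have hts_big : 3 * r < t - s := by
    rw [← hdist_st]
    rw [← hmax] at hbig
    exact (ENNReal.ofReal_lt_ofReal_iff_of_nonneg (by linarith)).1 hbig
  have hmemα : ∀ w ∈ Set.Icc (0:ℝ) L, f w ∈ α := fun w hw => hα ▸ Set.mem_image_of_mem f hw
  have key_in : ∀ w ∈ Set.Icc (0:ℝ) L, f w ∈ Metric.cthickening r U → s ≤ w ∧ w ≤ t := by
    intro w hw hwr
    have hwα : f w ∈ Metric.cthickening r U ∩ α := ⟨hwr, hmemα w hw⟩
    have h1 : dist (f w) (f t) ≤ dist (f s) (f t) := by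
      have h : edist (f w) (f t) ≤ EMetric.diam (Metric.cthickening r U ∩ α) :=
        EMetric.edist_le_diam_of_mem hwα ⟨htmem, hmemα t ht⟩
      rw [← hmax, edist_dist] at h
      exact (ENNReal.ofReal_le_ofReal_iff dist_nonneg).1 h
    have h2 : dist (f w) (f s) ≤ dist (f s) (f t) := by
      have h : edist (f w) (f s) ≤ EMetric.diam (Metric.cthickening r U ∩ α) :=
        EMetric.edist_le_diam_of_mem hwα ⟨hsmem, hmemα s hs⟩
      rw [← hmax, edist_dist] at h
      exact (ENNReal.ofReal_le_ofReal_iff dist_nonneg).1 h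
    rw [hiso w hw t ht, hdist_st] at h1
    rw [hiso w hw s hs, hdist_st] at h2
    have h1' := abs_le.1 h1
    have h2' := abs_le.1 h2
    exact ⟨by linarith [h1'.1], by linarith [h2'.2]⟩
  have hps := projSet_nonempty' hUcl hUne
  have hexC : ∃ w ∈ Set.Icc s t, f w ∈ Metric.cthickening C U := by
    by_contra hcon
    push_neg at hcon
    have hfar : ∀ w ∈ Set.Icc s t, C ≤ Metric.infDist (f w) U := by
      intro w hw
      have h := hcon w hw
      rw [memC] at h
      push_neg at h
      linarith
    obtain ⟨p, hp⟩ := hps (f s)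
    obtain ⟨q, hq⟩ := hps (f t)
    have hpq := proj_close hC0 hUcon hiso hs ht hst hfar hp hq
    have h4 : dist (f s) (f t) ≤ dist (f s) p + dist p q + dist q (f t) :=
      dist_triangle4 _ _ _ _
    rw [hp.2] at h4
    have h5 : dist q (f t) = Metric.infDist (f t) U := by rw [dist_comm]; exact hq.2
    rw [h5, hdist_st] at h4
    linarith
  set S : Set ℝ := {w ∈ Set.Icc (0:ℝ) L | f w ∈ Metric.cthickening C U} with hS
  have hSsub : ∀ w ∈ S, s ≤ w ∧ w ≤ t := by
    intro w hw
    exact key_in w hw.1 (Metric.cthickening_mono hCr U hw.2)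
  have hSne : S.Nonempty := by
    obtain ⟨w, hw, hwC⟩ := hexC
    exact ⟨w, ⟨by constructor <;> [linarith [hs.1, hw.1]; linarith [ht.2, hw.2]], hwC⟩⟩
  have hfc : ContinuousOn f (Set.Icc (0:ℝ) L) := by
    have hl : LipschitzOnWith 1 f (Set.Icc (0:ℝ) L) := by
      apply LipschitzOnWith.of_dist_le_mul
      intro x hx y hy
      rw [hiso x hx y hy, Real.dist_eq]
      simp
    exact hl.continuousOn
  have hScl : IsClosed S := by
    have heq : S = Set.Icc (0:ℝ) L ∩ f ⁻¹' (Metric.cthickening C U) := Set.ext fun w => Iff.rfl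
    rw [heq]
    exact hfc.preimage_isClosed_of_isClosed isClosed_Icc Metric.isClosed_cthickening
  have hSbb : BddBelow S := ⟨0, fun w hw => hw.1.1⟩
  have hSba : BddAbove S := ⟨L, fun w hw => hw.1.2⟩
  set u := sInf S with hu
  set v := sSup S with hv
  have huS : u ∈ S := hScl.csInf_mem hSne hSbb
  have hvS : v ∈ S := hScl.csSup_mem hSne hSba
  have huv : u ≤ v := csInf_le_csSup hSne hSbb hSba
  have hbound : ∀ w ∈ Set.Icc (0:ℝ) L, f w ∈ Metric.cthickening C U → u ≤ w ∧ w ≤ v :=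
    fun w hw hwc => ⟨csInf_le hSbb ⟨hw, hwc⟩, le_csSup hSba ⟨hw, hwc⟩⟩
  have hu_st := hSsub u huS
  have hv_st := hSsub v hvS
  have hnotC : ∀ w ∈ Set.Icc (0:ℝ) L, (w < u ∨ v < w) → C ≤ Metric.infDist (f w) U := by
    intro w hw hor
    by_contra h
    push_neg at h
    have := hbound w hw ((memC _).2 h.le)
    rcases hor with h1 | h1 <;> linarith [this.1, this.2]
  have hfuC : Metric.infDist (f u) U ≤ C := (memC _).1 huS.2
  have hfvC : Metric.infDist (f v) U ≤ C := (memC _).1 hvS.2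
  -- entry bound
  have hu_close : u - s ≤ r + 2 * C := by
    rcases eq_or_lt_of_le hu_st.1 with heq | hlt
    · rw [← heq]; linarith
    · refine le_of_forall_pos_le_add fun ε hε => ?_
      set ε' := min (ε / 4) (u - s) with hε'
      have hε'pos : 0 < ε' := lt_min (by linarith) (by linarith)
      have hε'le : ε' ≤ u - s := min_le_right _ _
      have hε'le2 : ε' ≤ ε / 4 := min_le_left _ _
      set w' := u - ε' with hw'
      have hw'mem : w' ∈ Set.Icc (0:ℝ) L := ⟨by linarith [hs.1], by linarith [huS.1.2]⟩
      have hfar : ∀ w ∈ Set.Icc s w', C ≤ Metric.infDist (f w) U := by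
        intro w hw
        refine hnotC w ⟨by linarith [hs.1, hw.1], by linarith [hw.2, hw'mem.2]⟩
          (Or.inl (by simp only [hw'] at hw; linarith [hw.2]))
      obtain ⟨p, hp⟩ := hps (f s)
      obtain ⟨q, hq⟩ := hps (f w')
      have hsw' : s ≤ w' := by simp only [hw']; linarith
      have hpq := proj_close hC0 hUcon hiso hs hw'mem hsw' hfar hp hq
      have h1 : dist (f s) (f w') = w' - s := by
        rw [hiso s hs w' hw'mem, abs_sub_comm, abs_of_nonneg (by linarith)]
      have hdu : dist (f w') (f u) = ε' := by
        rw [hiso w' hw'mem u huS.1, hw', abs_of_nonpos (by linarith)]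
        ring
      have h2 : Metric.infDist (f w') U ≤ C + ε' := by
        have h3 := Metric.infDist_le_infDist_add_dist (x := f w') (y := f u) (s := U)
        rw [hdu] at h3
        linarith
      have h4 : dist (f s) (f w') ≤ dist (f s) p + dist p q + dist q (f w') :=
        dist_triangle4 _ _ _ _
      rw [hp.2, h1] at h4
      have h5 : dist q (f w') = Metric.infDist (f w') U := by rw [dist_comm]; exact hq.2
      rw [h5] at h4
      have : w' - s = u - s - ε' := by rw [hw']; ring
      linarith
  -- exit bound
  have hv_close : t - v ≤ r + 2 * C := by
    rcases eq_or_lt_of_le hv_st.2 with heq | hlt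
    · rw [heq]; linarith
    · refine le_of_forall_pos_le_add fun ε hε => ?_
      set ε' := min (ε / 4) (t - v) with hε'
      have hε'pos : 0 < ε' := lt_min (by linarith) (by linarith)
      have hε'le : ε' ≤ t - v := min_le_right _ _
      have hε'le2 : ε' ≤ ε / 4 := min_le_left _ _
      set w' := v + ε' with hw'
      have hw'mem : w' ∈ Set.Icc (0:ℝ) L := ⟨by linarith [hvS.1.1], by linarith [ht.2]⟩
      have hfar : ∀ w ∈ Set.Icc w' t, C ≤ Metric.infDist (f w) U := by
        intro w hw
        refine hnotC w ⟨by linarith [hw'mem.1, hw.1], by linarith [hw.2, ht.2]⟩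
          (Or.inr (by simp only [hw'] at hw; linarith [hw.1]))
      obtain ⟨p, hp⟩ := hps (f w')
      obtain ⟨q, hq⟩ := hps (f t)
      have hw't : w' ≤ t := by simp only [hw']; linarith
      have hpq := proj_close hC0 hUcon hiso hw'mem ht hw't hfar hp hq
      have h1 : dist (f w') (f t) = t - w' := by
        rw [hiso w' hw'mem t ht, abs_sub_comm, abs_of_nonneg (by linarith)]
      have hdu : dist (f w') (f v) = ε' := by
        rw [hiso w' hw'mem v hvS.1, hw', abs_of_nonneg (by linarith)]
        ring
      have h2 : Metric.infDist (f w') U ≤ C + ε' := by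
        have h3 := Metric.infDist_le_infDist_add_dist (x := f w') (y := f v) (s := U)
        rw [hdu] at h3
        linarith
      have h4 : dist (f w') (f t) ≤ dist (f w') p + dist p q + dist q (f t) :=
        dist_triangle4 _ _ _ _
      rw [hp.2, h1] at h4
      have h5 : dist q (f t) = Metric.infDist (f t) U := by rw [dist_comm]; exact hq.2
      rw [h5] at h4
      have : t - w' = t - v - ε' := by rw [hw']; ring
      linarith
  -- projections of endpoints close to f u and f v
  have ha_proj : ∀ p ∈ projSet U a, dist p (f u) ≤ 2 * C := by
    intro p hp
    rcases eq_or_lt_of_le huS.1.1 with heq | hlt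
    · have hfu : f u = a := by rw [← heq, hf0]
      rw [hfu, dist_comm, hp.2]
      have : Metric.infDist a U ≤ C := by rw [← hfu]; exact hfuC
      linarith
    · refine le_of_forall_pos_le_add fun ε hε => ?_
      set ε' := min (ε / 2) u with hε'
      have hε'pos : 0 < ε' := lt_min (by linarith) hlt
      have hε'le : ε' ≤ u := min_le_right _ _
      have hε'le2 : ε' ≤ ε / 2 := min_le_left _ _
      set w' := u - ε' with hw'
      have hw'mem : w' ∈ Set.Icc (0:ℝ) L := ⟨by linarith, by linarith [huS.1.2]⟩
      have h0mem : (0:ℝ) ∈ Set.Icc (0:ℝ) L := ⟨le_refl 0, by linarith [hs.1, ht.2]⟩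
      have hfar : ∀ w ∈ Set.Icc (0:ℝ) w', C ≤ Metric.infDist (f w) U := by
        intro w hw
        refine hnotC w ⟨hw.1, by linarith [hw.2, hw'mem.2]⟩
          (Or.inl (by simp only [hw'] at hw; linarith [hw.2]))
      have hp0 : p ∈ projSet U (f 0) := by rw [hf0]; exact hp
      obtain ⟨q, hq⟩ := hps (f w')
      have h0w' : (0:ℝ) ≤ w' := by simp only [hw']; linarith
      have hpq := proj_close hC0 hUcon hiso h0mem hw'mem h0w' hfar hp0 hq
      have hdu : dist (f w') (f u) = ε' := by
        rw [hiso w' hw'mem u huS.1, hw', abs_of_nonpos (by linarith)]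
        ring
      have h2 : Metric.infDist (f w') U ≤ C + ε' := by
        have h3 := Metric.infDist_le_infDist_add_dist (x := f w') (y := f u) (s := U)
        rw [hdu] at h3
        linarith
      have h4 : dist p (f u) ≤ dist p q + dist q (f w') + dist (f w') (f u) :=
        dist_triangle4 _ _ _ _
      have h5 : dist q (f w') = Metric.infDist (f w') U := by rw [dist_comm]; exact hq.2
      rw [h5, hdu] at h4
      linarith
  have hb_proj : ∀ q ∈ projSet U b, dist q (f v) ≤ 2 * C := by
    intro q hq
    rcases eq_or_lt_of_le hvS.1.2 with heq | hlt
    · have hfv : f v = b := by rw [heq, hfl]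
      rw [hfv, dist_comm, hq.2]
      have : Metric.infDist b U ≤ C := by rw [← hfv]; exact hfvC
      linarith
    · refine le_of_forall_pos_le_add fun ε hε => ?_
      set ε' := min (ε / 2) (L - v) with hε'
      have hε'pos : 0 < ε' := lt_min (by linarith) (by linarith)
      have hε'le : ε' ≤ L - v := min_le_right _ _
      have hε'le2 : ε' ≤ ε / 2 := min_le_left _ _
      set w' := v + ε' with hw'
      have hw'mem : w' ∈ Set.Icc (0:ℝ) L := ⟨by linarith [hvS.1.1], by linarith⟩
      have hLmem : L ∈ Set.Icc (0:ℝ) L := ⟨by linarith [hs.1, ht.2], le_refl L⟩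
      have hfar : ∀ w ∈ Set.Icc w' L, C ≤ Metric.infDist (f w) U := by
        intro w hw
        refine hnotC w ⟨by linarith [hw'mem.1, hw.1], hw.2⟩
          (Or.inr (by simp only [hw'] at hw; linarith [hw.1]))
      have hqL : q ∈ projSet U (f L) := by rw [hfl]; exact hq
      obtain ⟨p, hp⟩ := hps (f w')
      have hw'L : w' ≤ L := by simp only [hw']; linarith
      have hpq := proj_close hC0 hUcon hiso hw'mem hLmem hw'L hfar hp hqL
      have hdu : dist (f w') (f v) = ε' := by
        rw [hiso w' hw'mem v hvS.1, hw', abs_of_nonneg (by linarith)]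
        ring
      have h2 : Metric.infDist (f w') U ≤ C + ε' := by
        have h3 := Metric.infDist_le_infDist_add_dist (x := f w') (y := f v) (s := U)
        rw [hdu] at h3
        linarith
      have h4 : dist q (f v) ≤ dist q p + dist p (f w') + dist (f w') (f v) :=
        dist_triangle4 _ _ _ _
      have h5 : dist p (f w') = Metric.infDist (f w') U := by rw [dist_comm]; exact hp.2
      rw [dist_comm q p, h5, hdu] at h4
      linarith
  have hduv : dist (f u) (f v) = v - u := by
    rw [hiso u huS.1 v hvS.1, abs_sub_comm, abs_of_nonneg (by linarith)]
  refine ⟨⟨u, huS.1, v, hvS.1, huv, huS.2, hvS.2, hbound, ?_, ?_⟩, ?_, ?_⟩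
  · rw [hiso u huS.1 s hs, abs_of_nonneg (by linarith [hu_st.1])]
    linarith
  · rw [hiso v hvS.1 t ht, abs_sub_comm, abs_of_nonneg (by linarith [hv_st.2])]
    linarith
  · rw [← hmax, hdist_st]
    have hfu_mem : f u ∈ Metric.cthickening C U ∩ α := ⟨huS.2, hmemα u huS.1⟩
    have hfv_mem : f v ∈ Metric.cthickening C U ∩ α := ⟨hvS.2, hmemα v hvS.1⟩
    calc ENNReal.ofReal (t - s) ≤ ENNReal.ofReal (dist (f u) (f v) + 3 * r) := by
          apply ENNReal.ofReal_le_ofReal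
          rw [hduv]
          linarith
      _ = ENNReal.ofReal (dist (f u) (f v)) + ENNReal.ofReal (3 * r) :=
          ENNReal.ofReal_add dist_nonneg (by linarith)
      _ ≤ EMetric.diam (Metric.cthickening C U ∩ α) + ENNReal.ofReal (3 * r) := by
          apply add_le_add_left
          rw [← edist_dist]
          exact EMetric.edist_le_diam_of_mem hfu_mem hfv_mem
  · obtain ⟨p, hp⟩ := hps a
    obtain ⟨q, hq⟩ := hps b
    have h1 := ha_proj p hp
    have h2 := hb_proj q hq
    have h3 : dist (f u) (f v) ≤ dist (f u) p + dist p q + dist q (f v) :=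
      dist_triangle4 _ _ _ _
    rw [dist_comm (f u) p, hduv] at h3
    rw [← hmax, hdist_st]
    calc ENNReal.ofReal (t - s) ≤ ENNReal.ofReal (dist p q + 4 * r) := by
          apply ENNReal.ofReal_le_ofReal
          linarith
      _ = ENNReal.ofReal (dist p q) + ENNReal.ofReal (4 * r) :=
          ENNReal.ofReal_add dist_nonneg (by linarith)
      _ ≤ projDist U a b + ENNReal.ofReal (4 * r) := by
          apply add_le_add_left
          rw [← edist_dist]
          exact EMetric.edist_le_diam_of_mem (Set.mem_union_left _ hp)
            (Set.mem_union_right _ hq)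


end ConfDyn
end
end
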